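/- For positive integers n, k with 0 ≤ k ≤ n, the polynomial ∑_{j=0}^{k} (-1)^j C(k,j) ∏_{i=0}^{n-1} (it + n - j) equals ∑_{φ ∈ F_{n,k}} t^{exc(φ)}, where F_{n,k} is the set of functions φ : [n] → [2n-1] with φ(i) ≤ n + i − 1 for all i ∈ [n] whose image contains each of 1,…,k, and exc(φ) = #{i ∈ [n] : φ(i) > n}. -/

import Mathlib

open Finset Polynomial

/-- per-coordinate sum of weights -/
lemma stmt9_per_i (n : ℕ) (S : Finset ℕ) (hS : S ⊆ Finset.Icc 1 n) (i : ℕ) (hi : i < n) :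
    ∑ v ∈ Finset.range (2 * n - 1),
        (if v + 1 ≤ n + i ∧ v + 1 ∉ S then (if n < v + 1 then (X : ℤ[X]) else 1) else 0)
      = C (i : ℤ) * X + C ((n : ℤ) - S.card) := by
  classical
  have hn : 0 < n := lt_of_le_of_lt (Nat.zero_le i) hi
  have h1 : n ≤ 2 * n - 1 := by omega
  have hcard : S.card ≤ n := by
    have := Finset.card_le_card hS
    simpa using this
  rw [Finset.range_eq_Ico, ← Finset.sum_Ico_consecutive _ (Nat.zero_le n) h1]
  have hfst : ∑ v ∈ Finset.Ico 0 n,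
      (if v + 1 ≤ n + i ∧ v + 1 ∉ S then (if n < v + 1 then (X : ℤ[X]) else 1) else 0)
      = C ((n : ℤ) - S.card) := by
    have hcong : ∀ v ∈ Finset.Ico 0 n,
        (if v + 1 ≤ n + i ∧ v + 1 ∉ S then (if n < v + 1 then (X : ℤ[X]) else 1) else 0)
        = if v + 1 ∈ S then 0 else 1 := by
      intro v hv
      simp only [Finset.mem_Ico] at hv
      by_cases hvs : v + 1 ∈ S
      · simp only [hvs, if_true]
        rw [if_neg]; tauto
      · rw [if_pos ⟨by omega, hvs⟩, if_neg (by omega), if_neg hvs]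
    rw [Finset.sum_congr rfl hcong, Finset.sum_ite, Finset.sum_const, Finset.sum_const,
      smul_zero, zero_add, nsmul_eq_mul, mul_one]
    have hin : ((Finset.Ico 0 n).filter (fun v => v + 1 ∈ S)).card = S.card := by
      apply Finset.card_bij (fun v _ => v + 1)
      · intro a ha; simp only [Finset.mem_filter] at ha; exact ha.2
      · intro a _ b _ h; omega
      · intro b hb
        have hb' := hS hb
        simp only [Finset.mem_Icc] at hb'
        exact ⟨b - 1, Finset.mem_filter.2 ⟨by simp; omega, by rw [Nat.sub_add_cancel hb'.1]; exact hb⟩, by omega⟩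
    have hout : ((Finset.Ico 0 n).filter (fun v => ¬ v + 1 ∈ S)).card = n - S.card := by
      have := Finset.card_filter_add_card_filter_not
        (s := Finset.Ico 0 n) (p := fun v => v + 1 ∈ S)
      simp only [Nat.card_Ico, Nat.sub_zero] at this
      omega
    rw [hout, show ((n : ℤ) - S.card) = ((n - S.card : ℕ) : ℤ) by push_cast [Nat.cast_sub hcard]; ring]
    simp [Polynomial.C_eq_natCast]
  have hsnd : ∑ v ∈ Finset.Ico n (2 * n - 1),
      (if v + 1 ≤ n + i ∧ v + 1 ∉ S then (if n < v + 1 then (X : ℤ[X]) else 1) else 0)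
      = C (i : ℤ) * X := by
    have hcong : ∀ v ∈ Finset.Ico n (2 * n - 1),
        (if v + 1 ≤ n + i ∧ v + 1 ∉ S then (if n < v + 1 then (X : ℤ[X]) else 1) else 0)
        = if v + 1 ≤ n + i then X else 0 := by
      intro v hv
      simp only [Finset.mem_Ico] at hv
      have hvs : v + 1 ∉ S := by
        intro hmem
        have := hS hmem
        simp only [Finset.mem_Icc] at this
        omega
      by_cases hvb : v + 1 ≤ n + i
      · rw [if_pos ⟨hvb, hvs⟩, if_pos (by omega), if_pos hvb]
      · rw [if_neg (by tauto), if_neg hvb]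
    rw [Finset.sum_congr rfl hcong, Finset.sum_ite, Finset.sum_const, Finset.sum_const,
      smul_zero, add_zero]
    have hfe : (Finset.Ico n (2 * n - 1)).filter (fun v => v + 1 ≤ n + i) = Finset.Ico n (n + i) := by
      ext v
      simp only [Finset.mem_filter, Finset.mem_Ico]
      omega
    rw [hfe, Nat.card_Ico]
    simp only [Nat.add_sub_cancel_left, nsmul_eq_mul]
    rw [Polynomial.C_eq_natCast]
  rw [hfst, hsnd]
  ring

lemma stmt9_avoid (n : ℕ) (hn : 0 < n) (S : Finset ℕ) (hS : S ⊆ Finset.Icc 1 n) :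
    ∏ i ∈ Finset.range n, (C (i : ℤ) * X + C ((n : ℤ) - S.card))
    = ∑ φ ∈ Finset.univ.filter (fun φ : Fin n → Fin (2 * n - 1) =>
        (∀ i : Fin n, (φ i : ℕ) + 1 ≤ n + (i : ℕ)) ∧ ∀ m ∈ S, ∀ i : Fin n, (φ i : ℕ) + 1 ≠ m),
      (X : ℤ[X]) ^ (Finset.univ.filter (fun i : Fin n => n < (φ i : ℕ) + 1)).card := by
  classical
  set W : ℕ → ℕ → ℤ[X] :=
    fun i v => if v + 1 ≤ n + i ∧ v + 1 ∉ S then (if n < v + 1 then (X : ℤ[X]) else 1) else 0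
    with hW
  have hrw : ∀ i ∈ Finset.range n, (C (i : ℤ) * X + C ((n : ℤ) - S.card)) =
      ∑ v ∈ Finset.range (2 * n - 1), W i v := by
    intro i hi
    exact (stmt9_per_i n S hS i (Finset.mem_range.mp hi)).symm
  rw [Finset.prod_congr rfl hrw, ← Fin.prod_univ_eq_prod_range]
  have hin : ∀ i : Fin n, ∑ v ∈ Finset.range (2 * n - 1), W (i : ℕ) v
      = ∑ v : Fin (2 * n - 1), W (i : ℕ) (v : ℕ) := by
    intro i
    exact (Fin.sum_univ_eq_sum_range _ _).symm
  rw [Finset.prod_congr rfl (fun i _ => hin i)]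
  rw [Finset.prod_univ_sum (fun _ : Fin n => (Finset.univ : Finset (Fin (2 * n - 1))))
    (fun i v => W (i : ℕ) (v : ℕ)), Fintype.piFinset_univ]
  rw [Finset.sum_filter]
  apply Finset.sum_congr rfl
  intro φ _
  by_cases hc : (∀ i : Fin n, (φ i : ℕ) + 1 ≤ n + (i : ℕ)) ∧
      ∀ m ∈ S, ∀ i : Fin n, (φ i : ℕ) + 1 ≠ m
  · rw [if_pos hc]
    have hfac : ∀ i : Fin n, W (i : ℕ) (φ i : ℕ)
        = if n < (φ i : ℕ) + 1 then (X : ℤ[X]) else 1 := by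
      intro i
      rw [hW]
      exact if_pos ⟨hc.1 i, fun hmem => hc.2 _ hmem i rfl⟩
    rw [Finset.prod_congr rfl (fun i _ => hfac i), Finset.prod_ite,
      Finset.prod_const, Finset.prod_const_one, mul_one]
  · rw [if_neg hc]
    rw [not_and_or] at hc
    rcases hc with hc | hc
    · push_neg at hc
      obtain ⟨i, hi⟩ := hc
      refine Finset.prod_eq_zero (Finset.mem_univ i) ?_
      rw [hW]
      exact if_neg (fun h => absurd h.1 (by omega))
    · push_neg at hc
      obtain ⟨m, hm, i, hi⟩ := hc
      refine Finset.prod_eq_zero (Finset.mem_univ i) ?_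
      rw [hW]
      refine if_neg (fun h => h.2 ?_)
      rwa [hi]

lemma stmt9_neg_one (A : Finset ℕ) :
    ∑ S ∈ A.powerset, (-1 : ℤ[X]) ^ S.card = if A = ∅ then 1 else 0 := by
  classical
  have h : ∑ S ∈ A.powerset, (-1 : ℤ[X]) ^ S.card
      = C (∑ S ∈ A.powerset, (-1 : ℤ) ^ S.card) := by
    rw [map_sum]
    simp
  rw [h, Finset.sum_powerset_neg_one_pow_card]
  split <;> simp

theorem stmt_9 (n k : ℕ) (hn : 0 < n) (hk : k ≤ n) :
    (∑ j ∈ Finset.range (k + 1),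
        (-1) ^ j * C ((k.choose j : ℤ)) *
          ∏ i ∈ Finset.range n, (C ((i : ℤ)) * X + C ((n : ℤ) - j)) : ℤ[X]) =
      ∑ φ ∈ Finset.univ.filter
          (fun φ : Fin n → Fin (2 * n - 1) =>
            (∀ i : Fin n, (φ i : ℕ) + 1 ≤ n + (i : ℕ)) ∧
            ∀ m : ℕ, 1 ≤ m → m ≤ k → ∃ i, (φ i : ℕ) + 1 = m),
        X ^ (Finset.univ.filter (fun i : Fin n => n < (φ i : ℕ) + 1)).card := by
  classical
  have hTcard : (Finset.Icc 1 k).card = k := by simp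
  have step1 : (∑ j ∈ Finset.range (k + 1),
        (-1) ^ j * C ((k.choose j : ℤ)) *
          ∏ i ∈ Finset.range n, (C ((i : ℤ)) * X + C ((n : ℤ) - j)) : ℤ[X])
      = ∑ S ∈ (Finset.Icc 1 k).powerset,
          (-1 : ℤ[X]) ^ S.card *
            ∏ i ∈ Finset.range n, (C ((i : ℤ)) * X + C ((n : ℤ) - S.card)) := by
    rw [Finset.sum_powerset_apply_card
      (fun j => (-1 : ℤ[X]) ^ j * ∏ i ∈ Finset.range n, (C ((i : ℤ)) * X + C ((n : ℤ) - j))),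
      hTcard]
    apply Finset.sum_congr rfl
    intro j _
    rw [nsmul_eq_mul, Polynomial.C_eq_natCast]
    ring
  rw [step1]
  have step2 : ∀ S ∈ (Finset.Icc 1 k).powerset,
      (-1 : ℤ[X]) ^ S.card *
          ∏ i ∈ Finset.range n, (C ((i : ℤ)) * X + C ((n : ℤ) - S.card))
      = ∑ φ ∈ Finset.univ.filter
            (fun φ : Fin n → Fin (2 * n - 1) => ∀ i : Fin n, (φ i : ℕ) + 1 ≤ n + (i : ℕ)),
          (if ∀ m ∈ S, ∀ i : Fin n, (φ i : ℕ) + 1 ≠ m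
            then (X : ℤ[X]) ^ (Finset.univ.filter (fun i : Fin n => n < (φ i : ℕ) + 1)).card
            else 0) * (-1 : ℤ[X]) ^ S.card := by
    intro S hSp
    have hS : S ⊆ Finset.Icc 1 n :=
      (Finset.mem_powerset.1 hSp).trans (Finset.Icc_subset_Icc_right hk)
    rw [stmt9_avoid n hn S hS, ← Finset.filter_filter, Finset.sum_filter, Finset.mul_sum]
    apply Finset.sum_congr rfl
    intro φ _
    ring
  rw [Finset.sum_congr rfl step2, Finset.sum_comm]
  have step3 : ∀ φ ∈ Finset.univ.filter
      (fun φ : Fin n → Fin (2 * n - 1) => ∀ i : Fin n, (φ i : ℕ) + 1 ≤ n + (i : ℕ)),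
      ∑ S ∈ (Finset.Icc 1 k).powerset,
        (if ∀ m ∈ S, ∀ i : Fin n, (φ i : ℕ) + 1 ≠ m
          then (X : ℤ[X]) ^ (Finset.univ.filter (fun i : Fin n => n < (φ i : ℕ) + 1)).card
          else 0) * (-1 : ℤ[X]) ^ S.card
      = if ((Finset.Icc 1 k).filter (fun m => ∀ i : Fin n, (φ i : ℕ) + 1 ≠ m)) = ∅
          then (X : ℤ[X]) ^ (Finset.univ.filter (fun i : Fin n => n < (φ i : ℕ) + 1)).card
          else 0 := by
    intro φ _
    have hcong : ∀ S ∈ (Finset.Icc 1 k).powerset,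
        (if ∀ m ∈ S, ∀ i : Fin n, (φ i : ℕ) + 1 ≠ m
          then (X : ℤ[X]) ^ (Finset.univ.filter (fun i : Fin n => n < (φ i : ℕ) + 1)).card
          else 0) * (-1 : ℤ[X]) ^ S.card
        = if ∀ m ∈ S, ∀ i : Fin n, (φ i : ℕ) + 1 ≠ m
          then (X : ℤ[X]) ^ (Finset.univ.filter (fun i : Fin n => n < (φ i : ℕ) + 1)).card
            * (-1 : ℤ[X]) ^ S.card
          else 0 := by
      intro S _
      rw [ite_mul, zero_mul]
    rw [Finset.sum_congr rfl hcong, ← Finset.sum_filter]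
    have hfilt : ((Finset.Icc 1 k).powerset).filter
        (fun S => ∀ m ∈ S, ∀ i : Fin n, (φ i : ℕ) + 1 ≠ m)
        = ((Finset.Icc 1 k).filter (fun m => ∀ i : Fin n, (φ i : ℕ) + 1 ≠ m)).powerset := by
      ext S
      simp only [Finset.mem_filter, Finset.mem_powerset, Finset.subset_iff, Finset.mem_filter]
      constructor
      · rintro ⟨h1, h2⟩ m hm
        exact ⟨h1 hm, h2 m hm⟩
      · intro h
        exact ⟨fun m hm => (h hm).1, fun m hm => (h hm).2⟩
    rw [hfilt, ← Finset.mul_sum, stmt9_neg_one, mul_ite, mul_one, mul_zero]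
  rw [Finset.sum_congr rfl step3, ← Finset.sum_filter, Finset.filter_filter]
  apply Finset.sum_congr _ (fun φ _ => rfl)
  apply Finset.filter_congr
  intro φ _
  simp only [Finset.filter_eq_empty_iff, Finset.mem_Icc, and_imp, not_forall, not_not]
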